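/- Let ℏ, a, b, t ∈ ℂ. If Φ : ℂ × ℂ → ℂ is smooth and solves ℏ ∂Φ/∂t = H_IV(x, ℏ∂_x, −a, −b, t)Φ, where H_IV(x, ℏ∂_x, a, b, t) = x(ℏ∂_x)² + (x² − tx − b)ℏ∂_x − ax − (a−2b)t, then Ψ(x,t) := Φ(ix, it) (i = √−1) solves ℏ ∂Ψ/∂t = H'_IV Ψ, where H'_IV is H_IV(x, ℏ∂_x, a, b, t) with ℏ replaced by −ℏ. -/

import Mathlib

open Complex

private lemma pd1 (G : ℂ × ℂ → ℂ) (hG : ContDiff ℂ ⊤ G) (x t : ℂ) :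
    deriv (fun z => G (z, t)) x = fderiv ℂ G (x, t) (1, 0) := by
  have h : HasDerivAt (fun z : ℂ => (z, t)) ((1:ℂ), (0:ℂ)) x :=
    (hasDerivAt_id x).prodMk (hasDerivAt_const x t)
  exact (((hG.differentiable (by simp)) (x, t)).hasFDerivAt.comp_hasDerivAt x h).deriv

private lemma pd2 (G : ℂ × ℂ → ℂ) (hG : ContDiff ℂ ⊤ G) (x t : ℂ) :
    deriv (fun s => G (x, s)) t = fderiv ℂ G (x, t) (0, 1) := by
  have h : HasDerivAt (fun s : ℂ => (x, s)) ((0:ℂ), (1:ℂ)) t :=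
    (hasDerivAt_const t x).prodMk (hasDerivAt_id t)
  exact (((hG.differentiable (by simp)) (x, t)).hasFDerivAt.comp_hasDerivAt t h).deriv

private lemma pdI1 (G : ℂ × ℂ → ℂ) (hG : ContDiff ℂ ⊤ G) (x c : ℂ) :
    deriv (fun y => G (I * y, c)) x = I * fderiv ℂ G (I * x, c) (1, 0) := by
  have h : HasDerivAt (fun y : ℂ => (I * y, c)) ((I:ℂ), (0:ℂ)) x := by
    have h1 : HasDerivAt (fun y : ℂ => I * y) I x := by
      simpa using (hasDerivAt_id x).const_mul I
    exact h1.prodMk (hasDerivAt_const x c)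
  have key : HasDerivAt (fun y => G (I * y, c)) (fderiv ℂ G (I * x, c) ((I:ℂ), (0:ℂ))) x :=
    ((hG.differentiable (by simp)) (I * x, c)).hasFDerivAt.comp_hasDerivAt x h
  rw [key.deriv]
  have : ((I:ℂ), (0:ℂ)) = I • ((1:ℂ), (0:ℂ)) := by simp
  rw [this, ContinuousLinearMap.map_smul, smul_eq_mul]

private lemma pdI2 (G : ℂ × ℂ → ℂ) (hG : ContDiff ℂ ⊤ G) (c t : ℂ) :
    deriv (fun s => G (c, I * s)) t = I * fderiv ℂ G (c, I * t) (0, 1) := by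
  have h : HasDerivAt (fun s : ℂ => (c, I * s)) ((0:ℂ), (I:ℂ)) t := by
    have h1 : HasDerivAt (fun s : ℂ => I * s) I t := by
      simpa using (hasDerivAt_id t).const_mul I
    exact (hasDerivAt_const t c).prodMk h1
  have key : HasDerivAt (fun s => G (c, I * s)) (fderiv ℂ G (c, I * t) ((0:ℂ), (I:ℂ))) t :=
    ((hG.differentiable (by simp)) (c, I * t)).hasFDerivAt.comp_hasDerivAt t h
  rw [key.deriv]
  have : ((0:ℂ), (I:ℂ)) = I • ((0:ℂ), (1:ℂ)) := by simp
  rw [this, ContinuousLinearMap.map_smul, smul_eq_mul]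

theorem stmt8 (ℏ a b : ℂ) (Φ : ℂ → ℂ → ℂ)
    (hΦ : ContDiff ℂ ⊤ fun p : ℂ × ℂ => Φ p.1 p.2)
    (heq : ∀ x t : ℂ,
      ℏ * deriv (fun s => Φ x s) t =
        x * ℏ ^ 2 * deriv (fun y => deriv (fun z => Φ z t) y) x
          + (x ^ 2 - t * x - (-b)) * ℏ * deriv (fun y => Φ y t) x
          - (-a) * x * Φ x t - ((-a) - 2 * (-b)) * t * Φ x t) :
    ∀ x t : ℂ,
      ℏ * deriv (fun s => Φ (I * x) (I * s)) t =
        x * (-ℏ) ^ 2 * deriv (fun y => deriv (fun z => Φ (I * z) (I * t)) y) x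
          + (x ^ 2 - t * x - b) * (-ℏ) * deriv (fun y => Φ (I * y) (I * t)) x
          - a * x * Φ (I * x) (I * t) - (a - 2 * b) * t * Φ (I * x) (I * t) := by
  intro x t
  set F : ℂ × ℂ → ℂ := fun p => Φ p.1 p.2 with hFdef
  have hF : ContDiff ℂ ⊤ F := hΦ
  -- the first partial derivative as a smooth function
  set g : ℂ × ℂ → ℂ := fun p => fderiv ℂ F p (1, 0) with hgdef
  have hg : ContDiff ℂ ⊤ g := by
    exact (ContinuousLinearMap.apply ℂ ℂ ((1:ℂ), (0:ℂ))).contDiff.comp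
      (hF.fderiv_right le_top)
  -- specialize the hypothesis at (I*x, I*t)
  have heq' := heq (I * x) (I * t)
  -- rewrite the hypothesis in terms of fderiv
  have e1 : deriv (fun s => Φ (I * x) s) (I * t) = fderiv ℂ F (I * x, I * t) (0, 1) :=
    pd2 F hF (I * x) (I * t)
  have e2 : deriv (fun y => Φ y (I * t)) (I * x) = fderiv ℂ F (I * x, I * t) (1, 0) :=
    pd1 F hF (I * x) (I * t)
  have e3 : (fun y => deriv (fun z => Φ z (I * t)) y) = fun y => g (y, I * t) := by
    funext y; exact pd1 F hF y (I * t)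
  have e4 : deriv (fun y => deriv (fun z => Φ z (I * t)) y) (I * x)
      = fderiv ℂ g (I * x, I * t) (1, 0) := by
    rw [e3]; exact pd1 g hg (I * x) (I * t)
  rw [e1, e4, e2] at heq'
  -- rewrite the goal in terms of fderiv
  have f1 : deriv (fun s => Φ (I * x) (I * s)) t
      = I * fderiv ℂ F (I * x, I * t) (0, 1) := pdI2 F hF (I * x) t
  have f2 : deriv (fun y => Φ (I * y) (I * t)) x
      = I * fderiv ℂ F (I * x, I * t) (1, 0) := pdI1 F hF x (I * t)
  have f3 : (fun y => deriv (fun z => Φ (I * z) (I * t)) y)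
      = fun y => I * g (I * y, I * t) := by
    funext y; exact pdI1 F hF y (I * t)
  have f4 : deriv (fun y => deriv (fun z => Φ (I * z) (I * t)) y) x
      = I * (I * fderiv ℂ g (I * x, I * t) (1, 0)) := by
    rw [f3, deriv_const_mul_field, pdI1 g hg x (I * t)]
  rw [f1, f2, f4]
  have hI2 : I * I = -1 := by simp [pow_two, I_sq]
  linear_combination I * heq' + (ℏ * I * x ^ 2 * fderiv ℂ F (I * x, I * t) (1, 0)
    - ℏ * I * x * t * fderiv ℂ F (I * x, I * t) (1, 0)
    + x * a * Φ (I * x) (I * t) - 2 * t * b * Φ (I * x) (I * t)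
    + t * a * Φ (I * x) (I * t)) * hI2
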